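/- Consider the tangential problem with linear programming structure: for an uncertainty set ΔU of pairs (ΔA, Δb) ∈ ℝ^{n×n} × ℝ^n, define v(ΔU) := min{ c^T γ : Ā γ + ((ΔA)x̄ − Δb) ≤ 0 componentwise for all (ΔA, Δb) ∈ ΔU }. Assume Ā ∈ ℝ^{n×n} is square and invertible, and that −c = Σ_{i=1}^n λ_i Ā_i^T for some scalars λ_i > 0, where Ā_i denotes the i-th row of Ā. Then for any nonempty compact uncertainty sets ΔS_1 and ΔS_2, v(ΔS_1 + ΔS_2) = v(ΔS_1) + v(ΔS_2), where ΔS_1 + ΔS_2 is the Minkowski sum. -/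

import Mathlib

open Set Filter Topology Matrix Bornology Asymptotics Pointwise

noncomputable section

/-- The (Bouligand) tangent cone of `C` at `xbar`:
`w` is tangent if `(xⱼ - xbar)/tⱼ → w` for some `xⱼ ∈ C`, `xⱼ → xbar`, `tⱼ ↓ 0`. -/
def tanCone {k : ℕ} (C : Set (Fin k → ℝ)) (xbar : Fin k → ℝ) : Set (Fin k → ℝ) :=
  {w | ∃ (xs : ℕ → Fin k → ℝ) (ts : ℕ → ℝ),
    (∀ j, xs j ∈ C) ∧ (∀ j, 0 < ts j) ∧
    Tendsto ts atTop (𝓝 0) ∧ Tendsto xs atTop (𝓝 xbar) ∧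
    Tendsto (fun j => (ts j)⁻¹ • (xs j - xbar)) atTop (𝓝 w)}

/-- Regular normals: `v ⬝ (x - xbar) ≤ o(‖x - xbar‖)` for `x ∈ C`. -/
def regNormal {k : ℕ} (C : Set (Fin k → ℝ)) (xbar : Fin k → ℝ) : Set (Fin k → ℝ) :=
  {v | ∀ ε > 0, ∃ δ > 0, ∀ x ∈ C, ‖x - xbar‖ < δ → v ⬝ᵥ (x - xbar) ≤ ε * ‖x - xbar‖}

/-- General normals: limits of regular normals at nearby points of `C`. -/
def genNormal {k : ℕ} (C : Set (Fin k → ℝ)) (xbar : Fin k → ℝ) : Set (Fin k → ℝ) :=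
  {v | ∃ xs vs : ℕ → Fin k → ℝ, (∀ j, xs j ∈ C) ∧ (∀ j, vs j ∈ regNormal C (xs j)) ∧
    Tendsto xs atTop (𝓝 xbar) ∧ Tendsto vs atTop (𝓝 v)}

/-- Clarke regularity: local closedness at `xbar` and all normals are regular. -/
def ClarkeRegularAt {k : ℕ} (C : Set (Fin k → ℝ)) (xbar : Fin k → ℝ) : Prop :=
  (∃ U ∈ 𝓝 xbar, IsClosed (C ∩ U)) ∧ genNormal C xbar = regNormal C xbar

/-- Regular (Fréchet) subgradients: `f x ≥ f xbar + v ⬝ (x - xbar) + o(‖x - xbar‖)`. -/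
def regSubgrad {k : ℕ} (f : (Fin k → ℝ) → ℝ) (xbar : Fin k → ℝ) : Set (Fin k → ℝ) :=
  {v | ∀ ε > 0, ∃ δ > 0, ∀ x, ‖x - xbar‖ < δ → f xbar + v ⬝ᵥ (x - xbar) - ε * ‖x - xbar‖ ≤ f x}

/-- General subgradients: limits of regular subgradients along `xⱼ → xbar`, `f xⱼ → f xbar`. -/
def genSubgrad {k : ℕ} (f : (Fin k → ℝ) → ℝ) (xbar : Fin k → ℝ) : Set (Fin k → ℝ) :=
  {v | ∃ xs vs : ℕ → Fin k → ℝ, Tendsto xs atTop (𝓝 xbar) ∧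
    Tendsto (fun j => f (xs j)) atTop (𝓝 (f xbar)) ∧
    (∀ j, vs j ∈ regSubgrad f (xs j)) ∧ Tendsto vs atTop (𝓝 v)}

/-- Subdifferential regularity: the general and regular subdifferentials agree. -/
def SubdiffRegularAt {k : ℕ} (f : (Fin k → ℝ) → ℝ) (xbar : Fin k → ℝ) : Prop :=
  genSubgrad f xbar = regSubgrad f xbar

/-- `f` is locally Lipschitz at `xbar`. -/
def LocLipschitzAt {k : ℕ} (f : (Fin k → ℝ) → ℝ) (xbar : Fin k → ℝ) : Prop :=
  ∃ K : NNReal, ∃ s ∈ 𝓝 xbar, LipschitzOnWith K f s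

/-- The subderivative `df(xbar)(w) = liminf_{τ↓0} (f(xbar+τw) - f(xbar))/τ`. -/
def subderiv {k : ℕ} (f : (Fin k → ℝ) → ℝ) (xbar w : Fin k → ℝ) : ℝ :=
  Filter.liminf (fun τ : ℝ => (f (xbar + τ • w) - f xbar) / τ) (𝓝[>] (0:ℝ))

lemma sInf_halfspaces {n : ℕ} (A : Matrix (Fin n) (Fin n) ℝ) (hA : IsUnit A.det)
    (c lam : Fin n → ℝ) (hlam : ∀ i, 0 < lam i) (hc : -c = ∑ i, lam i • A i)
    (w : Fin n → ℝ) :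
    sInf ((fun γ => c ⬝ᵥ γ) '' {γ | ∀ i, A i ⬝ᵥ γ ≤ w i}) = c ⬝ᵥ (A⁻¹ *ᵥ w) := by
  have hfeas : ∀ i, A i ⬝ᵥ (A⁻¹ *ᵥ w) = w i := by
    intro i
    have : A *ᵥ (A⁻¹ *ᵥ w) = w := by
      rw [Matrix.mulVec_mulVec, Matrix.mul_nonsing_inv A hA, Matrix.one_mulVec]
    exact congrFun this i
  have hcd : ∀ x : Fin n → ℝ, c ⬝ᵥ x = -∑ i, lam i * (A i ⬝ᵥ x) := by
    intro x
    have h1 := congrArg (fun z : Fin n → ℝ => z ⬝ᵥ x) hc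
    simp only [neg_dotProduct] at h1
    have h2 : (∑ i, lam i • A i) ⬝ᵥ x = ∑ i, lam i * (A i ⬝ᵥ x) := by
      simp only [dotProduct, Finset.sum_apply, Pi.smul_apply, smul_eq_mul,
        Finset.sum_mul, Finset.mul_sum]
      rw [Finset.sum_comm]
      congr 1; ext i; congr 1; ext j; ring
    rw [h2] at h1
    linarith
  apply IsLeast.csInf_eq
  constructor
  · exact ⟨A⁻¹ *ᵥ w, fun i => (hfeas i).le, rfl⟩
  · rintro y ⟨γ, hγ, rfl⟩
    show c ⬝ᵥ (A⁻¹ *ᵥ w) ≤ c ⬝ᵥ γ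
    rw [hcd γ, hcd (A⁻¹ *ᵥ w)]
    have : ∑ i, lam i * (A i ⬝ᵥ γ) ≤ ∑ i, lam i * (A i ⬝ᵥ (A⁻¹ *ᵥ w)) := by
      apply Finset.sum_le_sum
      intro i _
      rw [hfeas i]
      exact mul_le_mul_of_nonneg_left (hγ i) (hlam i).le
    linarith


/-- Set addition in nondegenerate linear programming
(Proposition `pro:set-add-nice`). -/
theorem set_addition_in_nondegenerate_linear_programming
    {n : ℕ} (A : Matrix (Fin n) (Fin n) ℝ) (hA : IsUnit A.det)
    (xbar c : Fin n → ℝ)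
    -- `-c` is a strictly positive combination of the rows of `A`
    (lam : Fin n → ℝ) (hlam : ∀ i, 0 < lam i) (hc : -c = ∑ i, lam i • A i)
    -- the optimal value of the tangential problem with uncertainty set `U`
    (v : Set (Matrix (Fin n) (Fin n) ℝ × (Fin n → ℝ)) → ℝ)
    (hv : ∀ U, v U = sInf ((fun γ => c ⬝ᵥ γ) ''
      {γ | ∀ u ∈ U, ∀ i, A i ⬝ᵥ γ + (u.1 i ⬝ᵥ xbar - u.2 i) ≤ 0}))
    (ΔS₁ ΔS₂ : Set (Matrix (Fin n) (Fin n) ℝ × (Fin n → ℝ)))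
    (h1ne : ΔS₁.Nonempty) (h2ne : ΔS₂.Nonempty)
    (h1c : IsCompact ΔS₁) (h2c : IsCompact ΔS₂) :
    v (ΔS₁ + ΔS₂) = v ΔS₁ + v ΔS₂ := by
  set f : Fin n → (Matrix (Fin n) (Fin n) ℝ × (Fin n → ℝ)) → ℝ :=
    fun i u => u.1 i ⬝ᵥ xbar - u.2 i with hf
  have hfcont : ∀ i, Continuous (f i) := by
    intro i
    have h1 : Continuous fun u : Matrix (Fin n) (Fin n) ℝ × (Fin n → ℝ) => u.1 i ⬝ᵥ xbar := by
      simp only [dotProduct]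
      exact continuous_finset_sum _ fun j _ =>
        (continuous_fst.matrix_elem i j).mul
          continuous_const
    exact h1.sub ((continuous_apply i).comp continuous_snd)
  -- formula for v on nonempty compact sets
  have key : ∀ U : Set (Matrix (Fin n) (Fin n) ℝ × (Fin n → ℝ)), U.Nonempty → IsCompact U →
      v U = c ⬝ᵥ (A⁻¹ *ᵥ fun i => -sSup (f i '' U)) := by
    intro U hUne hUc
    have hset : {γ | ∀ u ∈ U, ∀ i, A i ⬝ᵥ γ + (u.1 i ⬝ᵥ xbar - u.2 i) ≤ 0}
        = {γ | ∀ i, A i ⬝ᵥ γ ≤ -sSup (f i '' U)} := by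
      ext γ
      simp only [Set.mem_setOf_eq]
      constructor
      · intro h i
        rw [le_neg]
        apply csSup_le (hUne.image _)
        rintro z ⟨u, hu, rfl⟩
        have := h u hu i
        simp only [hf]; linarith
      · intro h u hu i
        have hz : f i u ≤ sSup (f i '' U) :=
          le_csSup (hUc.image (hfcont i)).bddAbove ⟨u, hu, rfl⟩
        have := h i
        simp only [hf] at hz ⊢
        linarith
    rw [hv U, hset]
    exact sInf_halfspaces A hA c lam hlam hc _
  have hsum_ne : (ΔS₁ + ΔS₂).Nonempty := h1ne.add h2ne
  have hsum_c : IsCompact (ΔS₁ + ΔS₂) := h1c.add h2c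
  rw [key _ hsum_ne hsum_c, key _ h1ne h1c, key _ h2ne h2c]
  have himg : ∀ i, f i '' (ΔS₁ + ΔS₂) = f i '' ΔS₁ + f i '' ΔS₂ := by
    intro i
    ext z
    constructor
    · rintro ⟨u, hu, rfl⟩
      rcases Set.mem_add.mp hu with ⟨p, hp, q, hq, rfl⟩
      refine Set.mem_add.mpr ⟨f i p, ⟨p, hp, rfl⟩, f i q, ⟨q, hq, rfl⟩, ?_⟩
      have hrow : (p.1 + q.1) i = p.1 i + q.1 i := rfl
      simp only [hf, Prod.fst_add, Prod.snd_add, Pi.add_apply, hrow, add_dotProduct]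
      ring
    · rintro ⟨_, ⟨p, hp, rfl⟩, _, ⟨q, hq, rfl⟩, rfl⟩
      refine ⟨p + q, Set.mem_add.mpr ⟨p, hp, q, hq, rfl⟩, ?_⟩
      have hrow : (p.1 + q.1) i = p.1 i + q.1 i := rfl
      simp only [hf, Prod.fst_add, Prod.snd_add, Pi.add_apply, hrow, add_dotProduct]
      ring
  have hsSup : ∀ i, sSup (f i '' (ΔS₁ + ΔS₂)) = sSup (f i '' ΔS₁) + sSup (f i '' ΔS₂) := by
    intro i
    rw [himg i]
    exact csSup_add (h1ne.image _) (h1c.image (hfcont i)).bddAbove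
      (h2ne.image _) (h2c.image (hfcont i)).bddAbove
  have hw : (fun i => -sSup (f i '' (ΔS₁ + ΔS₂)))
      = (fun i => -sSup (f i '' ΔS₁)) + (fun i => -sSup (f i '' ΔS₂)) := by
    funext i
    simp only [Pi.add_apply, hsSup i]
    ring
  rw [hw, Matrix.mulVec_add, dotProduct_add]
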